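/- arXiv:2207.00197 — 4 statements merged into one kernel-verified Lean document; each statement's English description precedes it below -/
import Mathlib

section
/- Let f ∈ 𝔽_{q^{n}}[t] be a product f = 𝔭₁⋯𝔭_s of polynomials such that each N_n(𝔭_i) is irreducible in 𝔽_q[t] and the N_n(𝔭_i) are pairwise distinct. Then N_n(f) is squarefree in 𝔽_q[t]. Conversely, if N_n(f) is squarefree in 𝔽_q[t], then in any factorization of f into irreducibles 𝔭₁⋯𝔭_s in 𝔽_{q^n}[t], the norms N_n(𝔭_i) are pairwise distinct irreducible polynomials in 𝔽_q[t]. -/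
open Polynomial

theorem stmt4 (p m n : ℕ) [Fact p.Prime] (hm : 0 < m) (hn : 0 < n)
    (Fq K : Type) [Field Fq] [Field K] [Algebra Fq K] [Fintype Fq] [Fintype K]
    (q : ℕ) (hq : q = p ^ m)
    (hcardq : Fintype.card Fq = q) (hcardK : Fintype.card K = q ^ n)
    (φ : K →+* K) (hφ : ∀ x : K, φ x = x ^ q)
    (Nn : Polynomial K → Polynomial K)
    (hN : ∀ f, Nn f = ∏ i ∈ Finset.range n, f.map (φ ^ i)) :
    (∀ (l : List (Polynomial K)) (g : Polynomial Fq),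
        (∀ r ∈ l, ∃ gr : Polynomial Fq, gr.map (algebraMap Fq K) = Nn r ∧ Irreducible gr) →
        l.Pairwise (fun r s => ¬ Associated (Nn r) (Nn s)) →
        g.map (algebraMap Fq K) = Nn l.prod →
        Squarefree g) ∧
    (∀ (l : List (Polynomial K)) (g : Polynomial Fq),
        (∀ r ∈ l, Irreducible r) →
        g.map (algebraMap Fq K) = Nn l.prod →
        Squarefree g →
        (∀ r ∈ l, ∃ gr : Polynomial Fq, gr.map (algebraMap Fq K) = Nn r ∧ Irreducible gr) ∧
        l.Pairwise (fun r s => ¬ Associated (Nn r) (Nn s))) := by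
  classical
  set α := algebraMap Fq K with hα
  have hinj : Function.Injective α := α.injective
  have hq2 : 1 < q := by
    subst hq; exact Nat.one_lt_pow hm.ne' (Fact.out (p := p.Prime)).one_lt
  -- Frobenius powers
  have hφpow : ∀ (i : ℕ) (x : K), (φ ^ i) x = x ^ q ^ i := by
    intro i
    induction i with
    | zero => intro x; simp
    | succ i ih =>
      intro x
      have h1 : (φ ^ (i + 1)) x = (φ ^ i) (φ x) := by rw [pow_succ]; rfl
      rw [h1, ih, hφ, ← pow_mul, ← pow_succ']
  have haq : ∀ a : Fq, a ^ q = a := fun a => by rw [← hcardq]; exact FiniteField.pow_card a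
  have hid : (φ ^ n : K →+* K) = RingHom.id K := by
    ext x
    rw [hφpow, ← hcardK]
    exact FiniteField.pow_card x
  have hcomp : ∀ i : ℕ, ((φ ^ i : K →+* K)).comp α = α := by
    intro i
    ext a
    simp only [RingHom.comp_apply, hφpow]
    rw [← map_pow, ← hcardq, FiniteField.pow_card_pow]
  -- fixed points descend
  have hfix : ∀ x : K, x ^ q = x → ∃ a : Fq, α a = x := by
    intro x hx
    set f : Polynomial K := X ^ q - X with hf
    have hdeg : f.natDegree = q := FiniteField.X_pow_card_sub_X_natDegree_eq K hq2
    have hf0 : f ≠ 0 := FiniteField.X_pow_card_sub_X_ne_zero K hq2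
    have hroot : x ∈ f.roots := by
      rw [mem_roots']
      exact ⟨hf0, by simp [hf, Polynomial.IsRoot, hx]⟩
    set T : Finset K := Finset.univ.image α with hT
    have hTsub : T ⊆ f.roots.toFinset := by
      intro y hy
      obtain ⟨a, _, rfl⟩ := Finset.mem_image.mp hy
      rw [Multiset.mem_toFinset, mem_roots']
      refine ⟨hf0, ?_⟩
      simp only [hf, IsRoot, eval_sub, eval_pow, eval_X]
      rw [← map_pow, haq, sub_self]
    have hcardT : T.card = q := by
      rw [hT, Finset.card_image_of_injective _ hinj, Finset.card_univ, hcardq]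
    have hle : f.roots.toFinset.card ≤ q :=
      le_trans (Multiset.toFinset_card_le _) (le_trans (Polynomial.card_roots' f) hdeg.le)
    have hTeq : T = f.roots.toFinset :=
      Finset.eq_of_subset_of_card_le hTsub (by rw [hcardT]; exact hle)
    have hxT : x ∈ T := by rw [hTeq, Multiset.mem_toFinset]; exact hroot
    obtain ⟨a, _, ha⟩ := Finset.mem_image.mp hxT
    exact ⟨a, ha⟩
  -- basic properties of Nn
  have hNmul : ∀ f g : Polynomial K, Nn (f * g) = Nn f * Nn g := by
    intro f g
    simp [hN, Polynomial.map_mul, Finset.prod_mul_distrib]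
  have hNone : Nn 1 = 1 := by simp [hN]
  have hNprod : ∀ l : List (Polynomial K), Nn l.prod = (l.map Nn).prod := by
    intro l
    induction l with
    | nil => simpa using hNone
    | cons a t ih => rw [List.prod_cons, hNmul, ih, List.map_cons, List.prod_cons]
  have hmap0 : ∀ r : Polynomial K, r.map (φ ^ 0 : K →+* K) = r := by
    intro r; rw [pow_zero, RingHom.one_def, Polynomial.map_id]
  have hdvd_self : ∀ r : Polynomial K, r ∣ Nn r := by
    intro r
    rw [hN]
    have h1 : r.map (1 : K →+* K) = r := by rw [RingHom.one_def, Polynomial.map_id]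
    have := Finset.dvd_prod_of_mem (fun i => r.map (φ ^ i)) (Finset.mem_range.mpr hn)
    simpa [h1] using this
  have hNne : ∀ r : Polynomial K, r ≠ 0 → Nn r ≠ 0 := by
    intro r hr
    rw [hN]
    exact Finset.prod_ne_zero_iff.mpr fun i _ => Polynomial.map_ne_zero hr
  have hnotunit : ∀ r : Polynomial K, Irreducible r → ¬ IsUnit (Nn r) := by
    intro r hr h
    exact hr.not_isUnit (isUnit_of_dvd_unit (hdvd_self r) h)
  -- descent: Nn r has coefficients in Fq
  have hdesc : ∀ r : Polynomial K, r ≠ 0 → ∃ gr : Polynomial Fq, gr.map α = Nn r := by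
    intro r hr
    have hfixed : (Nn r).map φ = Nn r := by
      rw [hN, Polynomial.map_prod]
      simp only [Polynomial.map_map]
      have hcompφ : ∀ i : ℕ, φ.comp (φ ^ i : K →+* K) = (φ ^ (i + 1) : K →+* K) := by
        intro i; rw [pow_succ']; rfl
      simp only [hcompφ]
      have hnn : r.map (φ ^ n : K →+* K) = r := by rw [hid, Polynomial.map_id]
      have e1 := Finset.prod_range_succ' (fun i => r.map (φ ^ i : K →+* K)) n
      have e2 := Finset.prod_range_succ (fun i => r.map (φ ^ i : K →+* K)) n
      simp only [hmap0 r, hnn] at e1 e2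
      have key : (∏ i ∈ Finset.range n, r.map (φ ^ (i + 1) : K →+* K)) * r
          = (∏ i ∈ Finset.range n, r.map (φ ^ i : K →+* K)) * r := by
        rw [← e1, e2, mul_comm]
      exact mul_right_cancel₀ hr key
    have hcoeff : ∀ k : ℕ, (Nn r).coeff k ∈ Set.range α := by
      intro k
      have : φ ((Nn r).coeff k) = (Nn r).coeff k := by
        conv_rhs => rw [← hfixed]
        rw [Polynomial.coeff_map]
      rw [hφ] at this
      obtain ⟨a, ha⟩ := hfix _ this
      exact ⟨a, ha⟩
    have : Nn r ∈ Polynomial.lifts α := (Polynomial.lifts_iff_coeff_lifts _).mpr hcoeff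
    obtain ⟨gr, hgr⟩ := (Polynomial.mem_lifts _).mp this
    exact ⟨gr, hgr⟩
  -- irreducibility of lifts, given squarefreeness of Nn r
  have hirrlem : ∀ r : Polynomial K, Irreducible r → Squarefree (Nn r) →
      ∃ gr : Polynomial Fq, gr.map α = Nn r ∧ Irreducible gr := by
    intro r hr hsq
    obtain ⟨gr, hgr⟩ := hdesc r hr.ne_zero
    refine ⟨gr, hgr, ?_⟩
    have hgrne : gr ≠ 0 := by
      intro h
      apply hNne r hr.ne_zero
      rw [← hgr, h, Polynomial.map_zero]
    have hgrnu : ¬ IsUnit gr := by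
      intro h
      apply hnotunit r hr
      rw [← hgr]
      have := h.map (Polynomial.mapRingHom α)
      simpa using this
    have hgrsq : Squarefree gr := by
      intro b hb
      have hbmap : (b.map α) * (b.map α) ∣ gr.map α := by
        rw [← Polynomial.map_mul]; exact Polynomial.map_dvd α hb
      rw [hgr] at hbmap
      have hbu : IsUnit (b.map α) := hsq _ hbmap
      have hb0 : b ≠ 0 := by
        intro h; rw [h, Polynomial.map_zero] at hbu; exact not_isUnit_zero hbu
      have hdb : b.natDegree = 0 := by
        have := Polynomial.natDegree_eq_zero_of_isUnit hbu
        rwa [Polynomial.natDegree_map] at this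
      rw [Polynomial.eq_C_of_natDegree_eq_zero hdb]
      refine Polynomial.isUnit_C.mpr (isUnit_iff_ne_zero.mpr ?_)
      intro h
      apply hb0
      rw [Polynomial.eq_C_of_natDegree_eq_zero hdb, h, map_zero]
    -- find an irreducible P over Fq with r ∣ P.map α
    have hrprime : Prime r := hr.prime
    have hrdvd : r ∣ gr.map α := by rw [hgr]; exact hdvd_self r
    obtain ⟨fs, hfs, hfsprod⟩ := UniqueFactorizationMonoid.exists_prime_factors gr hgrne
    have hassoc2 : Associated (fs.prod.map α) (gr.map α) := by
      simpa using hfsprod.map (Polynomial.mapRingHom α)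
    have hdvd2 : r ∣ (fs.map (Polynomial.map α)).prod := by
      rw [← Polynomial.map_multiset_prod]
      exact dvd_trans hrdvd hassoc2.symm.dvd
    obtain ⟨y, hy, hry⟩ := hrprime.exists_mem_multiset_dvd hdvd2
    obtain ⟨P, hPfs, rfl⟩ := Multiset.mem_map.mp hy
    have hPprime : Prime P := hfs P hPfs
    -- all conjugates of r divide P.map α
    have hi : ∀ i : ℕ, r.map (φ ^ i : K →+* K) ∣ P.map α := by
      intro i
      have := Polynomial.map_dvd (φ ^ i : K →+* K) hry
      rwa [Polynomial.map_map, hcomp i] at this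
    have hNP : Nn r ∣ (P.map α) ^ n := by
      rw [hN]
      calc (∏ i ∈ Finset.range n, r.map (φ ^ i : K →+* K))
          ∣ ∏ _i ∈ Finset.range n, P.map α :=
            Finset.prod_dvd_prod_of_dvd _ _ (fun i _ => hi i)
        _ = (P.map α) ^ n := by rw [Finset.prod_const, Finset.card_range]
    have hgrP : gr ∣ P ^ n := by
      have h2 : gr.map α ∣ (P ^ n).map α := by
        rw [Polynomial.map_pow, hgr]; exact hNP
      exact (Polynomial.map_dvd_map' α).mp h2
    have hgrP1 : gr ∣ P := (hgrsq.dvd_pow_iff_dvd hn.ne').mp hgrP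
    obtain ⟨c, hc⟩ := hgrP1
    rcases hPprime.irreducible.isUnit_or_isUnit hc with h | h
    · exact absurd h hgrnu
    · have hPg : Associated P gr := by
        rw [hc]; exact associated_mul_unit_left gr c h
      exact hPg.irreducible hPprime.irreducible
  -- pairwise non-associated, given squarefreeness
  have hpair : ∀ l : List (Polynomial K), (∀ r ∈ l, Irreducible r) →
      Squarefree (Nn l.prod) →
      l.Pairwise (fun r s => ¬ Associated (Nn r) (Nn s)) := by
    intro l
    induction l with
    | nil => intro _ _; exact List.Pairwise.nil
    | cons a t ih =>
      intro hirrl hsq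
      rw [List.prod_cons, hNmul] at hsq
      constructor
      · intro s hs hassoc
        have hdvdt : Nn s ∣ Nn t.prod := by
          rw [hNprod]
          exact List.dvd_prod (List.mem_map_of_mem (f := Nn) hs)
        have h1 : Nn a ∣ Nn t.prod := hassoc.dvd.trans hdvdt
        have h2 : Nn a * Nn a ∣ Nn a * Nn t.prod := mul_dvd_mul_left _ h1
        exact hnotunit a (hirrl a (List.mem_cons_self)) (hsq _ h2)
      · exact ih (fun r hr => hirrl r (List.mem_cons_of_mem a hr)) hsq.of_mul_right
  -- lifting lists elementwise
  have hlift : ∀ t : List (Polynomial K),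
      (∀ r ∈ t, ∃ gr : Polynomial Fq, gr.map α = Nn r ∧ Irreducible gr) →
      ∃ L : List (Polynomial Fq), L.map (Polynomial.map α) = t.map Nn ∧
        ∀ x ∈ L, Irreducible x := by
    intro t
    induction t with
    | nil => intro _; exact ⟨[], by simp, by simp⟩
    | cons a t ih =>
      intro h1
      obtain ⟨ga, hga, hgairr⟩ := h1 a (List.mem_cons_self)
      obtain ⟨L, hL, hLirr⟩ := ih (fun r hr => h1 r (List.mem_cons_of_mem a hr))
      refine ⟨ga :: L, by simp [hga, hL], ?_⟩
      intro x hx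
      rcases List.mem_cons.mp hx with rfl | hx
      · exact hgairr
      · exact hLirr x hx
  constructor
  · -- direction 1
    intro l
    induction l with
    | nil =>
      intro g _ _ hg
      have : g = 1 := by
        apply Polynomial.map_injective α hinj
        rw [hg, List.prod_nil, hNone, Polynomial.map_one]
      rw [this]
      exact squarefree_one
    | cons a t ih =>
      intro g h1 hp hg
      rw [List.prod_cons, hNmul] at hg
      obtain ⟨ga, hga, hgairr⟩ := h1 a (List.mem_cons_self)
      obtain ⟨L, hL, hLirr⟩ := hlift t (fun r hr => h1 r (List.mem_cons_of_mem a hr))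
      have hgt : L.prod.map α = Nn t.prod := by
        rw [Polynomial.map_list_prod, hL, ← hNprod]
      have hgeq : g = ga * L.prod := by
        apply Polynomial.map_injective α hinj
        rw [Polynomial.map_mul, hga, hgt, hg]
      rw [hgeq]
      refine squarefree_mul_iff.mpr ⟨?_, hgairr.squarefree,
        ih L.prod (fun r hr => h1 r (List.mem_cons_of_mem a hr)) hp.of_cons hgt⟩
      refine hgairr.isRelPrime_iff_not_dvd.mpr ?_
      intro hdvd
      obtain ⟨gs, hgsL, hdvd2⟩ := (hgairr.prime.dvd_prod_iff).mp hdvd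
      have hgsirr := hLirr gs hgsL
      have hassoc : Associated ga gs := hgairr.associated_of_dvd hgsirr hdvd2
      have hmem : Polynomial.map α gs ∈ t.map Nn := by
        rw [← hL]
        exact List.mem_map_of_mem hgsL
      obtain ⟨s, hst, hNs⟩ := List.mem_map.mp hmem
      refine (List.rel_of_pairwise_cons hp hst) ?_
      rw [hNs, ← hga]
      simpa using hassoc.map (Polynomial.mapRingHom α)
  · -- direction 2
    intro l g hirrl hg hsq
    have hsqK : Squarefree (g.map α) :=
      ((PerfectField.separable_iff_squarefree.mpr hsq).map).squarefree
    rw [hg] at hsqK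
    constructor
    · intro r hrl
      have hdvdr : Nn r ∣ Nn l.prod := by
        rw [hNprod]
        exact List.dvd_prod (List.mem_map_of_mem (f := Nn) hrl)
      exact hirrlem r (hirrl r hrl) (hsqK.squarefree_of_dvd hdvdr)
    · exact hpair l hirrl hsqK
end

section
/- Let ℓ be an odd prime, q coprime to ℓ, n_q the order of q mod ℓ, and ω a primitive complex ℓ-th root of unity. Let R be a set of coset representatives of (ℤ/ℓℤ)* modulo the cyclic subgroup ⟨q⟩. Define Ψ_{ℓ,n_q}(y) = ∏_{j∈R} (y − ∑_{k=0}^{n_q−1} ω^{j q^k}). Then Ψ_{ℓ,n_q}(y)^{n_q} · (y − n_q) = ∏_{j=0}^{ℓ−1} (y − ∑_{k=0}^{n_q−1} ω^{j q^k}), and this polynomial has integer coefficients. -/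
set_option linter.unusedSectionVars false

open Polynomial

section Aux

variable {ℓ : ℕ} [NeZero ℓ]

private lemma aux_pow {M : Type*} [CommMonoid M] {z : M} (hz : IsPrimitiveRoot z ℓ)
    {m : ℕ} {x : ZMod ℓ} (h : (m : ZMod ℓ) = x) : z ^ m = z ^ x.val := by
  have ho : orderOf z = ℓ := (hz.eq_orderOf).symm
  have hval : m % ℓ = x.val := by rw [← h, ZMod.val_natCast]
  calc z ^ m = z ^ (m % orderOf z) := (pow_mod_orderOf z m).symm
    _ = z ^ x.val := by rw [ho, hval]

private noncomputable def Sgen (ℓ q n : ℕ) {M : Type*} [CommRing M] (z : M) (a : ZMod ℓ) : M :=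
  ∑ k ∈ Finset.range n, z ^ ((a * (q : ZMod ℓ) ^ k).val)

private lemma Sgen_map {q n : ℕ} {M N : Type*} [CommRing M] [CommRing N] (f : M →+* N)
    (z : M) (a : ZMod ℓ) : f (Sgen ℓ q n z a) = Sgen ℓ q n (f z) a := by
  simp [Sgen, map_sum, map_pow]

private lemma Sgen_pow {q n : ℕ} {M : Type*} [CommRing M] {z : M} (hz : IsPrimitiveRoot z ℓ)
    (b : ℕ) (a : ZMod ℓ) : Sgen ℓ q n (z ^ b) a = Sgen ℓ q n z ((b : ZMod ℓ) * a) := by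
  unfold Sgen
  refine Finset.sum_congr rfl fun k _ => ?_
  rw [← pow_mul]
  refine aux_pow hz ?_
  push_cast [ZMod.natCast_val, ZMod.cast_id]
  ring

private lemma Sgen_shift {q n : ℕ} {M : Type*} [CommRing M] (z : M)
    (hqn : (q : ZMod ℓ) ^ n = 1) (a : ZMod ℓ) :
    Sgen ℓ q n z (a * (q : ZMod ℓ)) = Sgen ℓ q n z a := by
  set t : ℕ → M := fun k => z ^ ((a * (q : ZMod ℓ) ^ k).val) with ht
  have h1 : ∑ k ∈ Finset.range (n + 1), t k = (∑ k ∈ Finset.range n, t (k + 1)) + t 0 :=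
    Finset.sum_range_succ' t n
  have h2 : ∑ k ∈ Finset.range (n + 1), t k = (∑ k ∈ Finset.range n, t k) + t n :=
    Finset.sum_range_succ t n
  have h3 : t n = t 0 := by simp [ht, hqn]
  have h4 : Sgen ℓ q n z (a * (q : ZMod ℓ)) = ∑ k ∈ Finset.range n, t (k + 1) := by
    refine Finset.sum_congr rfl fun k _ => ?_
    simp only [ht]
    ring_nf
  have h5 : (∑ k ∈ Finset.range n, t (k + 1)) + t 0 = (∑ k ∈ Finset.range n, t k) + t 0 := by
    rw [← h1, h2, h3]
  rw [h4, add_right_cancel h5]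
  rfl

private lemma Sgen_shift_pow {q n : ℕ} {M : Type*} [CommRing M] (z : M)
    (hqn : (q : ZMod ℓ) ^ n = 1) (a : ZMod ℓ) (k : ℕ) :
    Sgen ℓ q n z (a * (q : ZMod ℓ) ^ k) = Sgen ℓ q n z a := by
  induction k with
  | zero => simp
  | succ k ih =>
      rw [pow_succ, ← mul_assoc, Sgen_shift _ hqn, ih]

end Aux

theorem stmt9 (ℓ : ℕ) (hℓ : ℓ.Prime) (hodd : Odd ℓ) (q : ℕ) (hq : Nat.Coprime q ℓ)
    (n : ℕ) (hn : n = orderOf (q : ZMod ℓ))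
    (ω : ℂ) (hω : IsPrimitiveRoot ω ℓ)
    (u : (ZMod ℓ)ˣ) (hu : (u : ZMod ℓ) = (q : ZMod ℓ))
    (R : Finset (ZMod ℓ)ˣ)
    (hR : ∀ x : (ZMod ℓ)ˣ, ∃! r, r ∈ R ∧ ∃ k : ℕ, x = r * u ^ k)
    (Ψ : ℂ → ℂ)
    (hΨ : ∀ y, Ψ y = ∏ r ∈ R,
      (y - ∑ k ∈ Finset.range n, ω ^ (((r * u ^ k : (ZMod ℓ)ˣ) : ZMod ℓ)).val)) :
    (∀ y : ℂ, Ψ y ^ n * (y - n)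
        = ∏ j ∈ Finset.range ℓ, (y - ∑ k ∈ Finset.range n, ω ^ (j * q ^ k))) ∧
    ∃ P : Polynomial ℤ, ∀ y : ℂ,
      Polynomial.aeval y P
        = ∏ j ∈ Finset.range ℓ, (y - ∑ k ∈ Finset.range n, ω ^ (j * q ^ k)) := by
  haveI : Fact ℓ.Prime := ⟨hℓ⟩
  haveI : NeZero ℓ := ⟨hℓ.pos.ne'⟩
  have hl1 : 1 < ℓ := hℓ.one_lt
  have hqn : (q : ZMod ℓ) ^ n = 1 := by rw [hn]; exact pow_orderOf_eq_one _
  have hn' : n = orderOf u := by rw [hn, ← hu, orderOf_units]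
  have hnpos : 0 < n := hn' ▸ orderOf_pos u
  -- coercion of unit products
  have hcoe : ∀ (r : (ZMod ℓ)ˣ) (k : ℕ),
      ((r * u ^ k : (ZMod ℓ)ˣ) : ZMod ℓ) = (r : ZMod ℓ) * (q : ZMod ℓ) ^ k := by
    intro r k
    rw [Units.val_mul, Units.val_pow_eq_pow_val, hu]
  have hSr : ∀ (r : (ZMod ℓ)ˣ) (k : ℕ),
      Sgen ℓ q n ω ((r * u ^ k : (ZMod ℓ)ˣ) : ZMod ℓ) = Sgen ℓ q n ω (r : ZMod ℓ) := by
    intro r k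
    rw [hcoe, Sgen_shift_pow _ hqn]
  -- rewrite the range-ℓ product as product over ZMod ℓ
  have hj : ∀ j k : ℕ, ω ^ (j * q ^ k) = ω ^ (((j : ZMod ℓ) * (q : ZMod ℓ) ^ k).val) := by
    intro j k
    refine aux_pow hω ?_
    push_cast
    ring
  have hrange : ∀ y : ℂ,
      (∏ j ∈ Finset.range ℓ, (y - ∑ k ∈ Finset.range n, ω ^ (j * q ^ k)))
        = ∏ a : ZMod ℓ, (y - Sgen ℓ q n ω a) := by
    intro y
    refine Finset.prod_bij (fun j _ => (j : ZMod ℓ)) (fun _ _ => Finset.mem_univ _) ?_ ?_ ?_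
    · intro a₁ h₁ a₂ h₂ h
      have e1 : ((a₁ : ZMod ℓ)).val = a₁ := ZMod.val_cast_of_lt (Finset.mem_range.mp h₁)
      have e2 : ((a₂ : ZMod ℓ)).val = a₂ := ZMod.val_cast_of_lt (Finset.mem_range.mp h₂)
      rw [← e1, ← e2]
      exact congrArg ZMod.val h
    · intro a _
      exact ⟨a.val, Finset.mem_range.mpr (ZMod.val_lt a), by
        simp [ZMod.natCast_val, ZMod.cast_id]⟩
    · intro j _
      congr 1
      unfold Sgen
      exact Finset.sum_congr rfl fun k _ => hj j k
  constructor
  · -- Part 1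
    intro y
    rw [hrange y, ← Finset.mul_prod_erase Finset.univ _ (Finset.mem_univ (0 : ZMod ℓ))]
    have h0 : Sgen ℓ q n ω (0 : ZMod ℓ) = (n : ℂ) := by
      simp [Sgen]
    have hunits : ∏ a ∈ Finset.univ.erase (0 : ZMod ℓ), (y - Sgen ℓ q n ω a)
        = ∏ x : (ZMod ℓ)ˣ, (y - Sgen ℓ q n ω (x : ZMod ℓ)) := by
      refine (Finset.prod_bij (fun (x : (ZMod ℓ)ˣ) _ => (x : ZMod ℓ)) ?_ ?_ ?_ ?_).symm
      · intro x _
        exact Finset.mem_erase.mpr ⟨x.ne_zero, Finset.mem_univ _⟩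
      · intro x₁ _ x₂ _ h
        exact Units.ext h
      · intro a ha
        have ha0 : a ≠ 0 := (Finset.mem_erase.mp ha).1
        exact ⟨(isUnit_iff_ne_zero.mpr ha0).unit, Finset.mem_univ _,
          (isUnit_iff_ne_zero.mpr ha0).unit_spec⟩
      · intro x _
        rfl
    have hcoset : ∏ x : (ZMod ℓ)ˣ, (y - Sgen ℓ q n ω (x : ZMod ℓ)) = Ψ y ^ n := by
      have hΨ' : Ψ y = ∏ r ∈ R, (y - Sgen ℓ q n ω (r : ZMod ℓ)) := by
        rw [hΨ]
        refine Finset.prod_congr rfl fun r _ => ?_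
        congr 1
        rw [← hSr r 0]
        unfold Sgen
        refine Finset.sum_congr rfl fun k _ => ?_
        rw [hcoe r 0, hcoe r k, pow_zero, mul_one]
      rw [hΨ', ← Finset.prod_pow]
      have hsplit : ∀ r : (ZMod ℓ)ˣ, (y - Sgen ℓ q n ω (r : ZMod ℓ)) ^ n
          = ∏ k ∈ Finset.range n, (y - Sgen ℓ q n ω (r : ZMod ℓ)) := by
        intro r; rw [Finset.prod_const, Finset.card_range]
      simp_rw [hsplit]
      rw [← Finset.prod_product']
      refine (Finset.prod_bij (fun (p : (ZMod ℓ)ˣ × ℕ) _ => p.1 * u ^ p.2) ?_ ?_ ?_ ?_).symm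
      · intro p _
        exact Finset.mem_univ _
      · intro p₁ hp₁ p₂ hp₂ h
        obtain ⟨hr₁, hk₁⟩ := Finset.mem_product.mp hp₁
        obtain ⟨hr₂, hk₂⟩ := Finset.mem_product.mp hp₂
        have h' : p₁.1 * u ^ p₁.2 = p₂.1 * u ^ p₂.2 := h
        obtain ⟨r, -, hru⟩ := hR (p₁.1 * u ^ p₁.2)
        have e₁ : p₁.1 = r := hru p₁.1 ⟨hr₁, p₁.2, rfl⟩
        have e₂ : p₂.1 = r := hru p₂.1 ⟨hr₂, p₂.2, h'⟩
        have er : p₁.1 = p₂.1 := e₁.trans e₂.symm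
        have hu' : u ^ p₁.2 = u ^ p₂.2 := by
          rw [er] at h'
          exact mul_left_cancel h' 
        have hk : p₁.2 = p₂.2 := by
          have hmod := pow_eq_pow_iff_modEq.mp hu'
          rw [← hn'] at hmod
          have := hmod
          unfold Nat.ModEq at this
          rwa [Nat.mod_eq_of_lt (Finset.mem_range.mp hk₁),
            Nat.mod_eq_of_lt (Finset.mem_range.mp hk₂)] at this
        exact Prod.ext er hk
      · intro x _
        obtain ⟨r, ⟨hrR, k, hk⟩, -⟩ := hR x
        refine ⟨(r, k % n), Finset.mem_product.mpr
          ⟨hrR, Finset.mem_range.mpr (Nat.mod_lt _ hnpos)⟩, ?_⟩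
        have huk : u ^ (k % n) = u ^ k := by
          rw [hn']
          exact pow_mod_orderOf u k
        show r * u ^ (k % n) = x
        rw [huk, ← hk]
      · intro p _
        rw [hSr p.1 p.2]
    rw [hunits, hcoset, h0]
    ring
  · -- Part 2
    set pℓ : ℕ+ := ⟨ℓ, hℓ.pos⟩ with hpℓ
    set L := CyclotomicField pℓ ℚ with hL
    haveI : NeZero ((pℓ : ℕ) : ℚ) := ⟨by exact_mod_cast pℓ.ne_zero⟩
    haveI : IsCyclotomicExtension {(pℓ : ℕ)} ℚ L :=
      CyclotomicField.isCyclotomicExtension (pℓ : ℕ) ℚ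
    haveI : FiniteDimensional ℚ L := IsCyclotomicExtension.finiteDimensional {(pℓ : ℕ)} ℚ L
    haveI : IsGalois ℚ L := IsCyclotomicExtension.isGalois {(pℓ : ℕ)} ℚ L
    haveI : Algebra.IsAlgebraic ℚ L := Algebra.IsAlgebraic.of_finite ℚ L
    set ζ : L := IsCyclotomicExtension.zeta pℓ ℚ L with hζdef
    have hζ : IsPrimitiveRoot ζ ℓ := IsCyclotomicExtension.zeta_spec pℓ ℚ L
    let φ : L →ₐ[ℚ] ℂ := IsAlgClosed.lift
    have hφinj : Function.Injective φ := φ.toRingHom.injective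
    set ω' : ℂ := φ ζ with hω'def
    have hω'p : IsPrimitiveRoot ω' ℓ := hζ.map_of_injective hφinj
    obtain ⟨b, hbl, hb⟩ := hω.eq_pow_of_pow_eq_one hω'p.pow_eq_one
    have hβ : (b : ZMod ℓ) ≠ 0 := by
      intro h
      have hd := (ZMod.natCast_eq_zero_iff b ℓ).mp h
      have hb0 : b = 0 := Nat.eq_zero_of_dvd_of_lt hd hbl
      rw [hb0, pow_zero] at hb
      exact hω'p.ne_one hl1 hb.symm
    set Q : L[X] := ∏ a : ZMod ℓ, (X - C (Sgen ℓ q n ζ a)) with hQdef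
    -- Galois invariance of coefficients
    have hfix : ∀ (σ : L ≃ₐ[ℚ] L) (m : ℕ), σ (Q.coeff m) = Q.coeff m := by
      intro σ m
      have h1 : Q.map (σ : L →+* L) = Q := by
        rw [hQdef, Polynomial.map_prod]
        simp only [Polynomial.map_sub, Polynomial.map_X, Polynomial.map_C]
        have hσζ : IsPrimitiveRoot (σ ζ) ℓ := hζ.map_of_injective σ.injective
        obtain ⟨c, hcl, hc⟩ := hζ.eq_pow_of_pow_eq_one hσζ.pow_eq_one
        have hγ : (c : ZMod ℓ) ≠ 0 := by
          intro h
          have hd := (ZMod.natCast_eq_zero_iff c ℓ).mp h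
          have hc0 : c = 0 := Nat.eq_zero_of_dvd_of_lt hd hcl
          rw [hc0, pow_zero] at hc
          exact hσζ.ne_one hl1 hc.symm
        have hterm : ∀ a : ZMod ℓ, (σ : L →+* L) (Sgen ℓ q n ζ a)
            = Sgen ℓ q n ζ ((c : ZMod ℓ) * a) := by
          intro a
          rw [Sgen_map (σ : L →+* L) ζ a]
          show Sgen ℓ q n (σ ζ) a = _
          rw [← hc, Sgen_pow hζ]
        simp_rw [hterm]
        exact Equiv.prod_comp (Equiv.mulLeft₀ ((c : ZMod ℓ)) hγ)
          (fun a => X - C (Sgen ℓ q n ζ a))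
      conv_rhs => rw [← h1]
      rw [Polynomial.coeff_map]
      rfl
    -- coefficients are rational
    have hbot : ∀ m : ℕ, ∃ r : ℚ, algebraMap ℚ L r = Q.coeff m := by
      intro m
      have hmem : Q.coeff m ∈ IntermediateField.fixedField (⊤ : Subgroup (L ≃ₐ[ℚ] L)) :=
        fun g => hfix g.1 m
      have heq : IntermediateField.fixedField (⊤ : Subgroup (L ≃ₐ[ℚ] L))
          = (⊥ : IntermediateField ℚ L) := by
        rw [← IntermediateField.fixingSubgroup_bot (F := ℚ) (E := L)]
        exact IsGalois.fixedField_fixingSubgroup ⊥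
      rw [heq] at hmem
      exact IntermediateField.mem_bot.mp hmem
    -- coefficients are integral over ℤ
    have hζint : IsIntegral ℤ ζ := hζ.isIntegral hℓ.pos
    have hS : ∀ a : ZMod ℓ, Sgen ℓ q n ζ a ∈ integralClosure ℤ L := by
      intro a
      exact Subalgebra.sum_mem _ fun k _ => Subalgebra.pow_mem _ hζint _
    have hint : ∀ m : ℕ, IsIntegral ℤ (Q.coeff m) := by
      set Q' : (integralClosure ℤ L)[X] :=
        ∏ a : ZMod ℓ, (X - C (⟨Sgen ℓ q n ζ a, hS a⟩ : integralClosure ℤ L)) with hQ'def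
      have hQ' : Q'.map (algebraMap (integralClosure ℤ L) L) = Q := by
        rw [hQ'def, hQdef, Polynomial.map_prod]
        simp only [Polynomial.map_sub, Polynomial.map_X, Polynomial.map_C]
        rfl
      intro m
      rw [← hQ', Polynomial.coeff_map]
      exact (Q'.coeff m).2
    -- coefficients are integers
    have hZcoeff : ∀ m : ℕ, Q.coeff m ∈ Set.range (algebraMap ℤ L) := by
      intro m
      obtain ⟨r, hr⟩ := hbot m
      have hrint : IsIntegral ℤ r := by
        have := hint m
        rw [← hr] at this
        exact (isIntegral_algebraMap_iff (algebraMap ℚ L).injective).mp this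
      obtain ⟨z, hz⟩ := IsIntegrallyClosed.isIntegral_iff.mp hrint
      refine ⟨z, ?_⟩
      rw [IsScalarTower.algebraMap_apply ℤ ℚ L z, hz, hr]
    obtain ⟨P, hP⟩ := (Polynomial.mem_lifts Q).mp ((Polynomial.lifts_iff_coeff_lifts Q).mpr hZcoeff)
    refine ⟨P, fun y => ?_⟩
    have hcomp : (algebraMap ℤ ℂ) = (φ : L →+* ℂ).comp (algebraMap ℤ L) :=
      RingHom.ext_int _ _
    have hmap : P.map (algebraMap ℤ ℂ) = ∏ a : ZMod ℓ, (X - C (Sgen ℓ q n ω' a)) := by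
      rw [hcomp, ← Polynomial.map_map, hP, hQdef, Polynomial.map_prod]
      simp only [Polynomial.map_sub, Polynomial.map_X, Polynomial.map_C]
      refine Finset.prod_congr rfl fun a _ => ?_
      rw [Sgen_map (φ : L →+* ℂ) ζ a]
      rfl
    rw [Polynomial.aeval_def, Polynomial.eval₂_eq_eval_map, hmap, Polynomial.eval_prod]
    simp only [Polynomial.eval_sub, Polynomial.eval_X, Polynomial.eval_C]
    rw [hrange y]
    have hterm : ∀ a : ZMod ℓ, Sgen ℓ q n ω' a = Sgen ℓ q n ω ((b : ZMod ℓ) * a) := by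
      intro a
      rw [← hb, Sgen_pow hω]
    simp_rw [hterm]
    exact Equiv.prod_comp (Equiv.mulLeft₀ ((b : ZMod ℓ)) hβ)
      (fun a => y - Sgen ℓ q n ω a)
end

section
/- For an odd prime ℓ, the polynomial Ψ_{ℓ,2}(y) = ∏_{j∈R} (y − (ω^j + ω^{−j})) (the minimal-type polynomial built from sums ω^j + ω^{−j} over coset representatives R of ±1 in (ℤ/ℓℤ)*) satisfies Gauss's formula: Ψ_{ℓ,2}(y) = ∑_{n=0}^{(ℓ−1)/2} (−1)^{⌊(ℓ−1−2n)/4⌋} · C(⌊(ℓ−1+2n)/4⌋, n) · y^n. -/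
open Finset Polynomial

noncomputable def gaussA (m n : ℕ) : ℂ :=
  (-1) ^ ((m - n) / 2) * (Nat.choose ((m + n) / 2) n)

noncomputable def gaussG (m : ℕ) (y : ℂ) : ℂ :=
  ∑ n ∈ Finset.range (m + 1), gaussA m n * y ^ n

lemma gaussA_eq_zero {m n : ℕ} (h : m < n) : gaussA m n = 0 := by
  have h2 : (m + n) / 2 < n := by omega
  simp [gaussA, Nat.choose_eq_zero_of_lt h2]

lemma gaussA_rec (m n : ℕ) : gaussA (m+2) (n+1) = gaussA (m+1) n - gaussA m (n+1) := by
  rcases lt_trichotomy n m with h | rfl | h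
  · have e1 : (m + 2 - (n+1)) / 2 = (m - (n+1))/2 + 1 := by omega
    have e2 : (m + 1 - n) / 2 = (m - (n+1))/2 + 1 := by omega
    have e3 : (m + 2 + (n+1)) / 2 = (m + n + 1)/2 + 1 := by omega
    have e4 : (m + 1 + n) / 2 = (m + n + 1) / 2 := by omega
    have e5 : (m + (n+1)) / 2 = (m + n + 1) / 2 := by omega
    rw [gaussA, gaussA, gaussA, e1, e2, e3, e4, e5, Nat.choose_succ_succ']
    push_cast
    ring
  · have e1 : (n + 2 - (n+1)) / 2 = 0 := by omega
    have e2 : (n + 2 + (n+1)) / 2 = n + 1 := by omega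
    have e3 : (n + 1 - n) / 2 = 0 := by omega
    have e4 : (n + 1 + n) / 2 = n := by omega
    have e5 : (n + (n+1)) / 2 = n := by omega
    rw [gaussA, gaussA, gaussA, e1, e2, e3, e4, e5]
    simp [Nat.choose_succ_self]
  · rcases Nat.eq_or_lt_of_le h with rfl | h2
    · have e1 : (m + 2 - (m+1+1)) / 2 = 0 := by omega
      have e2 : (m + 2 + (m+1+1)) / 2 = m + 2 := by omega
      have e3 : (m + 1 - (m+1)) / 2 = 0 := by omega
      have e4 : (m + 1 + (m+1)) / 2 = m + 1 := by omega
      rw [gaussA, gaussA, gaussA_eq_zero (by omega), e1, e2, e3, e4]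
      simp
    · rw [gaussA_eq_zero (by omega), gaussA_eq_zero (by omega), gaussA_eq_zero (by omega)]
      ring

lemma gaussA_rec0 (m : ℕ) : gaussA (m+2) 0 = - gaussA m 0 := by
  have e1 : (m + 2 - 0) / 2 = m / 2 + 1 := by omega
  simp [gaussA, e1, pow_succ]

lemma gaussG_rec (m : ℕ) (y : ℂ) : gaussG (m+2) y = y * gaussG (m+1) y - gaussG m y := by
  have hg : gaussG m y = ∑ n ∈ range (m+3), gaussA m n * y^n := by
    rw [gaussG]
    apply Finset.sum_subset (Finset.range_subset_range.2 (by omega))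
    intro i _ hi
    rw [gaussA_eq_zero (by simp at hi ⊢; omega)]
    ring
  rw [gaussG, hg,
    Finset.sum_range_succ' (fun n => gaussA (m+2) n * y^n) (m+2),
    Finset.sum_range_succ' (fun n => gaussA m n * y^n) (m+2),
    gaussG, Finset.mul_sum]
  have h1 : ∀ i ∈ range (m+2), gaussA (m+2) (i+1) * y^(i+1)
      = y * (gaussA (m+1) i * y^i) - gaussA m (i+1) * y^(i+1) := by
    intro i _
    rw [gaussA_rec]
    ring
  rw [Finset.sum_congr rfl h1, Finset.sum_sub_distrib, gaussA_rec0]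
  ring

lemma gaussG_eval : ∀ (m : ℕ) (x : ℂ), x ≠ 0 →
    gaussG m (x + x⁻¹) * (x ^ m * (x ^ 2 - 1)) = (x ^ (2*m+1) - 1) * (x + 1) := by
  intro m
  induction m using Nat.twoStepInduction with
  | zero =>
    intro x hx
    simp [gaussG, gaussA]
    ring
  | one =>
    intro x hx
    have h1 : gaussG 1 (x + x⁻¹) = 1 + (x + x⁻¹) := by
      simp [gaussG, gaussA, Finset.sum_range_succ]
    rw [h1]
    field_simp
    ring
  | more n ih1 ih2 =>
    intro x hx
    have h1 := ih1 x hx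
    have h2 := ih2 x hx
    rw [gaussG_rec]
    linear_combination ((x+x⁻¹)*x) * h2 - x^2 * h1
      - ((x+1)*(1 - x^(2*n+3))) * (mul_inv_cancel₀ hx)

lemma gaussG_eval' (m : ℕ) (x : ℂ) (hx : x ≠ 0) (hx1 : x + 1 ≠ 0) :
    gaussG m (x + x⁻¹) * (x ^ m * (x - 1)) = x ^ (2*m+1) - 1 := by
  have h := gaussG_eval m x hx
  apply mul_right_cancel₀ hx1
  rw [← h]
  ring

theorem stmt10 (ℓ : ℕ) (hℓ : ℓ.Prime) (hodd : Odd ℓ)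
    (ω : ℂ) (hω : IsPrimitiveRoot ω ℓ)
    (R : Finset (ZMod ℓ)ˣ)
    (hR : ∀ x : (ZMod ℓ)ˣ, ∃! r, r ∈ R ∧ (x = r ∨ x = -r))
    (Ψ : ℂ → ℂ)
    (hΨ : ∀ y, Ψ y = ∏ r ∈ R, (y - (ω ^ ((r : ZMod ℓ)).val + ω ^ ((-(r : ZMod ℓ) : ZMod ℓ)).val))) :
    ∀ y : ℂ, Ψ y = ∑ n ∈ Finset.range ((ℓ - 1) / 2 + 1),
      (-1 : ℂ) ^ ((ℓ - 1 - 2 * n) / 4) * (Nat.choose ((ℓ - 1 + 2 * n) / 4) n) * y ^ n := by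
  classical
  haveI : Fact ℓ.Prime := ⟨hℓ⟩
  obtain ⟨k, hk⟩ := hodd
  have hl2 : 2 ≤ ℓ := hℓ.two_le
  have hl3 : 3 ≤ ℓ := by omega
  set m := (ℓ - 1) / 2 with hm'
  have hm : ℓ = 2 * m + 1 := by omega
  set c : (ZMod ℓ)ˣ → ℂ := fun u => ω ^ ((u : ZMod ℓ)).val with hc
  have hvalne : ∀ u : (ZMod ℓ)ˣ, ((u : ZMod ℓ)).val ≠ 0 := by
    intro u h
    have h0 : (u : ZMod ℓ) = 0 := by
      rwa [ZMod.val_eq_zero] at h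
    exact u.ne_zero h0
  have hpair : ∀ r : (ZMod ℓ)ˣ, c r * c (-r) = 1 := by
    intro r
    have h1 : ((r : ZMod ℓ)).val + ((-r : (ZMod ℓ)ˣ) : ZMod ℓ).val = ℓ := by
      have h2 : ((r : ZMod ℓ) + ((-r : (ZMod ℓ)ˣ) : ZMod ℓ)).val = 0 := by
        simp
      rw [ZMod.val_add] at h2
      have h3 := ZMod.val_lt (r : ZMod ℓ)
      have h4 := ZMod.val_lt ((-r : (ZMod ℓ)ˣ) : ZMod ℓ)
      have h5 := hvalne r
      have h6 := hvalne (-r)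
      have hdvd := Nat.dvd_of_mod_eq_zero h2
      obtain ⟨q, hq⟩ := hdvd
      rcases Nat.lt_or_ge q 2 with hq2 | hq2
      · interval_cases q <;> omega
      · have : ℓ * 2 ≤ ℓ * q := Nat.mul_le_mul_left ℓ hq2
        omega
    rw [hc]
    simp only
    rw [← pow_add, h1, hω.pow_eq_one]
  -- cardinality and decomposition
  have hneg_inj : Function.Injective (fun r : (ZMod ℓ)ˣ => -r) :=
    fun a b h => by simpa using congrArg Neg.neg h
  have hdisj : Disjoint R (R.image (fun r => -r)) := by
    rw [Finset.disjoint_right]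
    intro x hximg hxR
    obtain ⟨r, hrR, hrx⟩ := Finset.mem_image.1 hximg
    obtain ⟨s, _, huniq⟩ := hR x
    have e1 := huniq x ⟨hxR, Or.inl rfl⟩
    have e2 := huniq r ⟨hrR, Or.inr hrx.symm⟩
    have hxx : x = -x := by rw [e1, ← e2] at hrx ⊢; exact hrx.symm
    have h2 : (2 : ZMod ℓ) * (x : ZMod ℓ) = 0 := by
      have := congrArg (fun u : (ZMod ℓ)ˣ => (u : ZMod ℓ)) hxx
      simp only [Units.val_neg] at this
      linear_combination this
    have h2ne : (2 : ZMod ℓ) ≠ 0 := by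
      have : ((2 : ℕ) : ZMod ℓ) ≠ 0 := by
        rw [Ne, ZMod.natCast_eq_zero_iff]
        intro hdvd
        have := Nat.le_of_dvd (by omega) hdvd
        omega
      simpa using this
    have hxne : (x : ZMod ℓ) ≠ 0 := x.ne_zero
    rcases mul_eq_zero.1 h2 with h | h
    · exact h2ne h
    · exact hxne h
  have hcover : R ∪ R.image (fun r => -r) = Finset.univ := by
    apply Finset.eq_univ_iff_forall.2
    intro x
    obtain ⟨s, ⟨hsR, hsx⟩, -⟩ := hR x
    rcases hsx with h | h
    · exact Finset.mem_union_left _ (h ▸ hsR)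
    · exact Finset.mem_union_right _ (Finset.mem_image.2 ⟨s, hsR, h.symm⟩)
  have hunits_card : Fintype.card (ZMod ℓ)ˣ = ℓ - 1 := by
    rw [ZMod.card_units_eq_totient, Nat.totient_prime hℓ]
  have hcardR : R.card = m := by
    have hcu := Finset.card_union_of_disjoint hdisj
    rw [hcover, Finset.card_univ, hunits_card,
      Finset.card_image_of_injective _ hneg_inj] at hcu
    omega
  -- key product identity
  have hprodkey : ∀ x : ℂ, x ≠ 0 → (x - 1) * (x ^ m * Ψ (x + x⁻¹)) = x ^ ℓ - 1 := by
    intro x hx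
    have h1 : x ^ ℓ - 1 = ∏ i ∈ Finset.range ℓ, (x - ω ^ i) := by
      have hpoly := X_pow_sub_C_eq_prod hω (by omega : 0 < ℓ) (one_pow ℓ)
      have := congrArg (Polynomial.eval x) hpoly
      simpa [Polynomial.eval_prod] using this
    have h2 : ∏ i ∈ Finset.range ℓ, (x - ω ^ i)
        = (x - 1) * ∏ u : (ZMod ℓ)ˣ, (x - c u) := by
      rw [← Finset.mul_prod_erase (Finset.range ℓ) _
        (Finset.mem_range.2 (by omega : 0 < ℓ)), pow_zero]
      congr 1
      symm
      refine Finset.prod_nbij (s := (Finset.univ : Finset (ZMod ℓ)ˣ))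
        (t := (Finset.range ℓ).erase 0) (fun u => ((u : ZMod ℓ)).val) ?_ ?_ ?_ ?_
      · intro u _
        exact Finset.mem_erase.2 ⟨hvalne u, Finset.mem_range.2 (ZMod.val_lt _)⟩
      · intro u _ v _ h
        exact Units.ext (ZMod.val_injective ℓ h)
      · intro j hj
        simp only [Finset.coe_erase, Set.mem_diff, Finset.mem_coe,
          Finset.mem_range, Set.mem_singleton_iff] at hj
        obtain ⟨hjlt, hjne⟩ := hj
        have hz : ((j : ZMod ℓ)) ≠ 0 := by
          intro h0
          have : ((j : ZMod ℓ)).val = 0 := by rw [h0]; simp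
          rw [ZMod.val_cast_of_lt hjlt] at this
          exact hjne this
        refine ⟨Units.mk0 (j : ZMod ℓ) hz, by simp, ?_⟩
        simp [ZMod.val_cast_of_lt hjlt]
      · intro u _
        rfl
    have h3 : ∏ u : (ZMod ℓ)ˣ, (x - c u)
        = ∏ r ∈ R, ((x - c r) * (x - c (-r))) := by
      rw [← hcover, Finset.prod_union hdisj,
        Finset.prod_image (fun a _ b _ h => hneg_inj h), ← Finset.prod_mul_distrib]
    have h4 : ∀ r ∈ R, (x - c r) * (x - c (-r))
        = x * ((x + x⁻¹) - (c r + c (-r))) := by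
      intro r _
      linear_combination hpair r - mul_inv_cancel₀ hx
    have h5 : x ^ m * Ψ (x + x⁻¹) = ∏ r ∈ R, ((x - c r) * (x - c (-r))) := by
      rw [hΨ]
      have h6 : ∀ r ∈ R, (x - c r) * (x - c (-r))
          = x * ((x + x⁻¹) - (ω ^ ((r : ZMod ℓ)).val + ω ^ ((-(r : ZMod ℓ) : ZMod ℓ)).val)) := by
        intro r hr
        rw [h4 r hr]
        simp [hc]
      rw [Finset.prod_congr rfl h6, Finset.prod_mul_distrib, Finset.prod_const, hcardR]
    rw [h1, h2, h3, h5]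
  -- polynomials
  set P : Polynomial ℂ := ∏ r ∈ R, (Polynomial.X - Polynomial.C (c r + c (-r))) with hP
  set Q : Polynomial ℂ := ∑ n ∈ Finset.range (m + 1),
    Polynomial.C (gaussA m n) * Polynomial.X ^ n with hQ
  have hPe : ∀ y : ℂ, P.eval y = Ψ y := by
    intro y
    rw [hΨ, hP]
    rw [Polynomial.eval_prod]
    apply Finset.prod_congr rfl
    intro r _
    have : c (-r) = ω ^ ((-(r : ZMod ℓ) : ZMod ℓ)).val := by rw [hc]; simp
    simp [this, hc]
  have hQe : ∀ y : ℂ, Q.eval y = gaussG m y := by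
    intro y
    rw [hQ, Polynomial.eval_finset_sum, gaussG]
    simp
  have hPQ : P = Q := by
    apply Polynomial.eq_of_infinite_eval_eq
    have hinfIoi : (Set.Ioi (1 : ℝ)).Infinite := Set.Ioi_infinite 1
    have hinj : Set.InjOn (fun t : ℝ => ((t : ℂ) + (t : ℂ)⁻¹)) (Set.Ioi 1) := by
      intro a ha b hb hab
      simp only [Set.mem_Ioi] at ha hb
      have ha0 : a ≠ 0 := by linarith
      have hb0 : b ≠ 0 := by linarith
      have hab' : a + a⁻¹ = b + b⁻¹ := by
        have : ((a + a⁻¹ : ℝ) : ℂ) = ((b + b⁻¹ : ℝ) : ℂ) := by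
          push_cast
          exact hab
        exact_mod_cast this
      have key : (a - b) * (a * b - 1) = 0 := by
        field_simp at hab'
        nlinarith [hab']
      have hab1 : a * b > 1 := by nlinarith
      have : a - b = 0 := by
        rcases mul_eq_zero.1 key with h | h
        · exact h
        · nlinarith
      linarith
    apply Set.Infinite.mono ?_ (hinfIoi.image hinj)
    intro y hy
    obtain ⟨t, ht, rfl⟩ := hy
    simp only [Set.mem_Ioi] at ht
    set x : ℂ := (t : ℂ) with hxdef
    have hx0 : x ≠ 0 := by
      simp only [hxdef, ne_eq, Complex.ofReal_eq_zero]
      linarith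
    have hx1 : x + 1 ≠ 0 := by
      simp only [hxdef]
      intro h
      have : (t : ℂ) = -1 := by linear_combination h
      have : t = -1 := by exact_mod_cast this
      linarith
    have hxm1 : x - 1 ≠ 0 := by
      simp only [hxdef]
      intro h
      have : (t : ℂ) = 1 := by linear_combination h
      have : t = 1 := by exact_mod_cast this
      linarith
    have hfac : x ^ m * (x - 1) ≠ 0 := by
      exact mul_ne_zero (pow_ne_zero _ hx0) hxm1
    have hA := hprodkey x hx0
    have hB := gaussG_eval' m x hx0 hx1
    have hA' : Ψ (x + x⁻¹) * (x ^ m * (x - 1)) = x ^ (2 * m + 1) - 1 := by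
      rw [← hm, ← hA]
      ring
    show P.eval (x + x⁻¹) = Q.eval (x + x⁻¹)
    rw [hPe, hQe]
    apply mul_right_cancel₀ hfac
    rw [hA', hB]
  intro y
  rw [← hPe y, hPQ, hQe y, gaussG]
  apply Finset.sum_congr rfl
  intro n _
  have e1 : (ℓ - 1 - 2 * n) / 4 = (m - n) / 2 := by omega
  have e2 : (ℓ - 1 + 2 * n) / 4 = (m + n) / 2 := by omega
  rw [gaussA, e1, e2]
end

section
/- Let ℓ be a prime, q a prime power with q ≡ 1 (mod ℓ). Let F ∈ 𝔽_q[t] be monic squarefree with factorization into coprime squarefree monic parts F = F₁ F₂ ⋯ F_{ℓ−1} and character χ = χ_{F₁} χ_{F₂}² ⋯ χ_{F_{ℓ−1}}^{ℓ−1}, where χ_P(a) is determined by a^{(q^{deg P}−1)/ℓ} mod P. Then the restriction of χ to 𝔽_q* is trivial if and only if ℓ divides deg(F₁ F₂² ⋯ F_{ℓ−1}^{ℓ−1}); more precisely, for a ∈ 𝔽_q*, χ(a) = Ω(a^{deg(F₁F₂²⋯F_{ℓ−1}^{ℓ−1}) (q−1)/ℓ}). -/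
lemma aux_geom (q : ℕ) (hq : 1 ≤ q) : ∀ d : ℕ,
    q ^ d - 1 = (q - 1) * ∑ j ∈ Finset.range d, q ^ j := by
  intro d
  induction d with
  | zero => simp
  | succ d ih =>
    rw [Finset.sum_range_succ, mul_add, ← ih, pow_succ]
    have h1 : (q - 1) * q ^ d = q * q ^ d - q ^ d := by
      rw [Nat.sub_mul, one_mul]
    have h2 : 1 ≤ q ^ d := Nat.one_le_pow _ _ hq
    have h3 : q ^ d ≤ q * q ^ d := Nat.le_mul_of_pos_left _ hq
    have h4 : q ^ d * q = q * q ^ d := mul_comm _ _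
    omega

lemma aux_cong (ℓ q d : ℕ) (hℓ : ℓ ≠ 0) (hq : 1 ≤ q) (hql : ℓ ∣ q - 1) :
    (q ^ d - 1) / ℓ ≡ (q - 1) / ℓ * d [MOD q - 1] := by
  set S : ℕ := ∑ j ∈ Finset.range d, q ^ j with hS
  obtain ⟨k, hk⟩ := hql
  have hℓ0 : 0 < ℓ := Nat.pos_of_ne_zero hℓ
  have hgeom := aux_geom q hq d
  have hdiv : (q ^ d - 1) / ℓ = k * S := by
    rw [hgeom, hk, mul_assoc, mul_comm ℓ, Nat.mul_div_cancel _ hℓ0]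
  have hkq : (q - 1) / ℓ = k := by rw [hk, mul_comm, Nat.mul_div_cancel _ hℓ0]
  rw [hdiv, hkq]
  have hSd : S ≡ d [MOD ℓ] := by
    have hq' : q = ℓ * k + 1 := by omega
    have : (S : ZMod ℓ) = (d : ZMod ℓ) := by
      rw [hS]; push_cast
      rw [hq']; push_cast
      simp
    exact (ZMod.natCast_eq_natCast_iff _ _ _).mp this
  have h := hSd.mul_left' (c := k)
  rwa [show k * ℓ = q - 1 by rw [mul_comm]; omega] at h

lemma aux_degsum {Fq : Type} [Field Fq] [DecidableEq Fq]
    (f : Polynomial Fq) (hf : f ≠ 0) :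
    ((UniqueFactorizationMonoid.normalizedFactors f).map Polynomial.natDegree).sum
      = f.natDegree := by
  have hassoc := UniqueFactorizationMonoid.prod_normalizedFactors hf
  have hmon : ∀ p ∈ UniqueFactorizationMonoid.normalizedFactors f, p.Monic := by
    intro p hp
    have h0 : p ≠ 0 := (UniqueFactorizationMonoid.irreducible_of_normalized_factor p hp).ne_zero
    have := UniqueFactorizationMonoid.normalize_normalized_factor p hp
    rw [← this]
    exact Polynomial.monic_normalize h0
  rw [← Polynomial.natDegree_multiset_prod_of_monic _ hmon]
  exact Polynomial.natDegree_eq_of_degree_eq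
    (Polynomial.degree_eq_degree_of_associated hassoc)

lemma aux_prod_pow {M : Type*} [CommMonoid M] {α : Type*} (c : M) (f : α → ℕ)
    (m : Multiset α) : (m.map fun x => c ^ f x).prod = c ^ (m.map f).sum := by
  induction m using Multiset.induction with
  | empty => simp
  | cons a s ih => simp [ih, pow_add]

theorem stmt12 (ℓ : ℕ) (hℓ : ℓ.Prime) (Fq : Type) [Field Fq] [Fintype Fq]
    [DecidableEq Fq] [DecidableEq (Polynomial Fq)]
    (q : ℕ) (hq : q = Fintype.card Fq) (hql : ℓ ∣ q - 1)
    (Ω : Fqˣ →* ℂˣ)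
    (hΩ : ∀ x : Fqˣ, x ^ ℓ = 1 → Ω x = 1 → x = 1)
    (F : ℕ → Polynomial Fq)
    (hmonic : ∀ i ∈ Finset.Ico 1 ℓ, (F i).Monic)
    (hsqf : ∀ i ∈ Finset.Ico 1 ℓ, Squarefree (F i))
    (hcop : ∀ i ∈ Finset.Ico 1 ℓ, ∀ j ∈ Finset.Ico 1 ℓ, i ≠ j → IsCoprime (F i) (F j))
    (χ : Fqˣ → ℂˣ)
    (hχ : ∀ a, χ a = ∏ i ∈ Finset.Ico 1 ℓ,
      (((UniqueFactorizationMonoid.normalizedFactors (F i)).map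
        (fun P => Ω (a ^ ((q ^ P.natDegree - 1) / ℓ)))).prod) ^ i)
    (D : ℕ) (hD : D = ∑ i ∈ Finset.Ico 1 ℓ, i * (F i).natDegree) :
    (∀ a : Fqˣ, χ a = Ω (a ^ (D * ((q - 1) / ℓ)))) ∧
    ((∀ a : Fqˣ, χ a = 1) ↔ ℓ ∣ D) := by
  have hq2 : 2 ≤ q := by rw [hq]; exact Fintype.one_lt_card
  have hcard : Fintype.card Fqˣ = q - 1 := by rw [hq, Fintype.card_units]
  have hcard1 : ∀ a : Fqˣ, a ^ (q - 1) = 1 := by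
    intro a; rw [← hcard]; exact pow_card_eq_one
  have part1 : ∀ a : Fqˣ, χ a = Ω (a ^ (D * ((q - 1) / ℓ))) := by
    intro a
    set b : Fqˣ := a ^ ((q - 1) / ℓ) with hb
    have hpow : ∀ d : ℕ, a ^ ((q ^ d - 1) / ℓ) = b ^ d := by
      intro d
      rw [hb, ← pow_mul, pow_eq_pow_iff_modEq]
      exact (aux_cong ℓ q d hℓ.ne_zero (by omega) hql).of_dvd
        (hcard ▸ orderOf_dvd_card)
    rw [hχ a]
    have hterm : ∀ i ∈ Finset.Ico 1 ℓ,
        (((UniqueFactorizationMonoid.normalizedFactors (F i)).map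
          (fun P => Ω (a ^ ((q ^ P.natDegree - 1) / ℓ)))).prod) ^ i
        = Ω b ^ ((F i).natDegree * i) := by
      intro i hi
      have : (fun P : Polynomial Fq => Ω (a ^ ((q ^ P.natDegree - 1) / ℓ)))
          = fun P => Ω b ^ P.natDegree := by
        funext P; rw [hpow, map_pow]
      rw [this, aux_prod_pow, aux_degsum _ (hmonic i hi).ne_zero, pow_mul]
    rw [Finset.prod_congr rfl hterm, Finset.prod_pow_eq_pow_sum]
    have hS : ∑ i ∈ Finset.Ico 1 ℓ, (F i).natDegree * i = D := by
      rw [hD]; exact Finset.sum_congr rfl fun i _ => mul_comm _ _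
    rw [hS, ← map_pow, hb, ← pow_mul, mul_comm]
  refine ⟨part1, ?_, ?_⟩
  · intro h
    obtain ⟨g, hg⟩ := IsCyclic.exists_generator (α := Fqˣ)
    have horder : orderOf g = q - 1 := by
      rw [orderOf_eq_card_of_forall_mem_zpowers hg, Nat.card_eq_fintype_card, hcard]
    have h1 : Ω (g ^ (D * ((q - 1) / ℓ))) = 1 := (part1 g).symm.trans (h g)
    have hxl : (g ^ (D * ((q - 1) / ℓ))) ^ ℓ = 1 := by
      rw [← pow_mul, mul_assoc, Nat.div_mul_cancel hql, mul_comm, pow_mul,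
        hcard1, one_pow]
    have hx1 := hΩ _ hxl h1
    have hdvd := orderOf_dvd_of_pow_eq_one hx1
    rw [horder] at hdvd
    obtain ⟨k, hk⟩ := hql
    have hk0 : 0 < k := by
      rcases Nat.eq_zero_or_pos k with h0 | h0
      · exfalso; rw [h0, mul_zero] at hk; omega
      · exact h0
    have hkq : (q - 1) / ℓ = k := by rw [hk, mul_comm, Nat.mul_div_cancel _ hℓ.pos]
    rw [hkq, hk, mul_comm ℓ k] at hdvd
    exact (Nat.mul_dvd_mul_iff_left hk0).mp (by rwa [mul_comm D k] at hdvd)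
  · intro hdvd a
    rw [part1 a]
    obtain ⟨c, hc⟩ := hdvd
    have hexp : D * ((q - 1) / ℓ) = (q - 1) * c := by
      rw [hc, mul_comm ℓ c, mul_assoc, Nat.mul_div_cancel' hql, mul_comm]
    rw [hexp, pow_mul, hcard1, one_pow, map_one]
end
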